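/- Let m ≥ 2 and let A be an m × m real matrix satisfying: A is invertible, each row has entries linearly independent over ℚ, and the last row is orthogonal to all other rows. Define orders <_1, …, <_{m−1} on ℤ^m by x <_i y iff c_i·x < c_i·y, where c_i is the i-th row of A. Then for any reals x_i < y_i (i = 1, …, m−1), there exists z ∈ ℤ^m with x_i < c_i·z < y_i for all i = 1, …, m−1. Consequently (<_1, …, <_{m−1}) is a generic (m−1)-tuple of right-invariant orders on ℤ^m. -/

import Mathlib

open Finset

set_option maxHeartbeats 1000000

open Finset Submodule Module

/-- Coordinates are dominated by the Euclidean distance. -/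
private lemma coord_le_dist {n : ℕ} (v w : EuclideanSpace ℝ (Fin n)) (i : Fin n) :
    |v i - w i| ≤ dist v w := by
  rw [EuclideanSpace.dist_eq, ← Real.sqrt_sq_eq_abs]
  apply Real.sqrt_le_sqrt
  have h := Finset.single_le_sum (f := fun j => dist (v j) (w j) ^ 2)
    (fun j _ => sq_nonneg _) (Finset.mem_univ i)
  simpa [Real.dist_eq, sq_abs] using h

/-- If a subgroup of Euclidean space is not dense, then there is a nonzero linear
functional taking integer values on it. -/
private lemma exists_int_functional {n : ℕ} (Γ : AddSubgroup (EuclideanSpace ℝ (Fin n)))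
    (hnd : ¬ Dense (Γ : Set (EuclideanSpace ℝ (Fin n)))) :
    ∃ f : EuclideanSpace ℝ (Fin n) →ₗ[ℝ] ℝ, f ≠ 0 ∧ ∀ x ∈ Γ, ∃ k : ℤ, f x = (k : ℝ) := by
  classical
  let H : AddSubgroup (EuclideanSpace ℝ (Fin n)) := Γ.topologicalClosure
  have hHclosed : IsClosed (H : Set (EuclideanSpace ℝ (Fin n))) := Γ.isClosed_topologicalClosure
  -- the maximal linear subspace contained in the closure `H`
  let V : Submodule ℝ (EuclideanSpace ℝ (Fin n)) :=
  { carrier := {v | ∀ t : ℝ, t • v ∈ H}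
    add_mem' := fun {a b} ha hb t => by simpa [smul_add] using H.add_mem (ha t) (hb t)
    zero_mem' := fun t => by simpa using H.zero_mem
    smul_mem' := fun c v hv => fun t => by simpa [smul_smul] using hv (t * c) }
  have hVmem : ∀ v, v ∈ V ↔ ∀ t : ℝ, t • v ∈ H := fun v => Iff.rfl
  have hVsubH : ∀ v ∈ V, v ∈ H := fun v hv => by simpa using ((hVmem v).mp hv) 1
  -- the "discrete part" of `H`
  let L : Submodule ℤ (EuclideanSpace ℝ (Fin n)) :=
    (AddSubgroup.toIntSubmodule H) ⊓ (Vᗮ.restrictScalars ℤ)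
  have hLmem : ∀ x, x ∈ L ↔ x ∈ H ∧ x ∈ Vᗮ := fun x => Iff.rfl
  -- `L` is discrete
  have hdisc : ∃ ε : ℝ, 0 < ε ∧ ∀ x ∈ L, ‖x‖ < ε → x = 0 := by
    by_contra hcon
    push_neg at hcon
    choose xs hxsL hxsnorm hxsne using fun k : ℕ => hcon (1 / (k + 1)) (by positivity)
    have hxpos : ∀ k, 0 < ‖xs k‖ := fun k => norm_pos_iff.mpr (hxsne k)
    let u : ℕ → EuclideanSpace ℝ (Fin n) := fun k => (‖xs k‖)⁻¹ • xs k
    have hu_sphere : ∀ k, u k ∈ Metric.sphere (0 : EuclideanSpace ℝ (Fin n)) 1 := by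
      intro k
      simp only [u, Metric.mem_sphere, dist_zero_right, norm_smul, norm_inv, norm_norm]
      exact inv_mul_cancel₀ (hxpos k).ne'
    obtain ⟨u₀, hu₀mem, φ, hφmono, hφtendsto⟩ :=
      (isCompact_sphere (0 : EuclideanSpace ℝ (Fin n)) 1).tendsto_subseq hu_sphere
    have hnorm_tendsto : Filter.Tendsto (fun k => ‖xs (φ k)‖) Filter.atTop (nhds 0) := by
      have h1 : ∀ k : ℕ, ‖xs (φ k)‖ ≤ 1 / (k + 1) := by
        intro k
        refine (hxsnorm (φ k)).le.trans ?_
        have hk : (k : ℝ) + 1 ≤ (φ k : ℝ) + 1 := by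
          have hkk : k ≤ φ k := hφmono.le_apply
          have : (k : ℝ) ≤ (φ k : ℝ) := by exact_mod_cast hkk
          linarith
        exact one_div_le_one_div_of_le (by positivity) hk
      exact squeeze_zero (fun k => norm_nonneg _) h1 tendsto_one_div_add_atTop_nhds_zero_nat
    have hline : ∀ t : ℝ, t • u₀ ∈ H := by
      intro t
      have hmemH : ∀ k, (⌊t / ‖xs (φ k)‖⌋ : ℤ) • xs (φ k) ∈ H := fun k =>
        AddSubgroup.zsmul_mem H ((hLmem _).mp (hxsL (φ k))).1 _
      have heq : ∀ k, ((⌊t / ‖xs (φ k)‖⌋ : ℤ) • xs (φ k))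
          = ((⌊t / ‖xs (φ k)‖⌋ : ℝ) * ‖xs (φ k)‖) • u (φ k) := by
        intro k
        rw [mul_smul, Int.cast_smul_eq_zsmul]
        congr 1
        rw [smul_smul, mul_inv_cancel₀ (hxpos (φ k)).ne', one_smul]
      have hscal : Filter.Tendsto (fun k => (⌊t / ‖xs (φ k)‖⌋ : ℝ) * ‖xs (φ k)‖)
          Filter.atTop (nhds t) := by
        have hbound : ∀ k, |(⌊t / ‖xs (φ k)‖⌋ : ℝ) * ‖xs (φ k)‖ - t| ≤ ‖xs (φ k)‖ := by
          intro k
          set r := ‖xs (φ k)‖ with hr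
          have hrpos : 0 < r := hxpos (φ k)
          have h1 : (⌊t / r⌋ : ℝ) ≤ t / r := Int.floor_le _
          have h2 : t / r < ⌊t / r⌋ + 1 := Int.lt_floor_add_one _
          have hc : (t / r) * r = t := div_mul_cancel₀ t hrpos.ne'
          have hle : (⌊t / r⌋ : ℝ) * r ≤ t := by
            nlinarith [mul_le_mul_of_nonneg_right h1 hrpos.le]
          have hge : t ≤ (⌊t / r⌋ : ℝ) * r + r := by
            nlinarith [mul_le_mul_of_nonneg_right h2.le hrpos.le]
          rw [abs_le]
          constructor <;> linarith
        have : Filter.Tendsto (fun k => (⌊t / ‖xs (φ k)‖⌋ : ℝ) * ‖xs (φ k)‖ - t)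
            Filter.atTop (nhds 0) := by
          apply squeeze_zero_norm hbound hnorm_tendsto
        simpa using this.add_const t
      have hten : Filter.Tendsto (fun k => (⌊t / ‖xs (φ k)‖⌋ : ℤ) • xs (φ k))
          Filter.atTop (nhds (t • u₀)) := by
        simp_rw [heq]
        exact hscal.smul hφtendsto
      exact hHclosed.mem_of_tendsto hten (Filter.Eventually.of_forall hmemH)
    have hu₀V : u₀ ∈ V := (hVmem u₀).mpr hline
    have hu₀Vperp : u₀ ∈ Vᗮ := by
      have hmem : ∀ k, u (φ k) ∈ Vᗮ := fun k =>
        Vᗮ.smul_mem _ ((hLmem _).mp (hxsL (φ k))).2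
      exact (Submodule.closed_of_finiteDimensional Vᗮ).mem_of_tendsto hφtendsto
        (Filter.Eventually.of_forall hmem)
    have : u₀ = 0 := by
      have h0 := (Submodule.mem_orthogonal V u₀).mp hu₀Vperp u₀ hu₀V
      exact inner_self_eq_zero.mp h0
    rw [this] at hu₀mem
    simp at hu₀mem
  obtain ⟨ε, hε, hball⟩ := hdisc
  haveI : DiscreteTopology L := by
    apply discreteTopology_of_isOpen_singleton_zero
    have hset : ({0} : Set L) =
        (Subtype.val : L → EuclideanSpace ℝ (Fin n)) ⁻¹' (Metric.ball 0 ε) := by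
      ext x
      simp only [Set.mem_singleton_iff, Set.mem_preimage, Metric.mem_ball, dist_zero_right]
      constructor
      · rintro rfl; simpa using hε
      · intro h; exact Subtype.ext (hball x.1 x.2 h)
    rw [hset]
    exact continuous_subtype_val.isOpen_preimage _ Metric.isOpen_ball
  -- the span of `L` and `L` seen inside it
  set W : Submodule ℝ (EuclideanSpace ℝ (Fin n)) := span ℝ (L : Set (EuclideanSpace ℝ (Fin n)))
    with hW
  have hLW : (L : Set (EuclideanSpace ℝ (Fin n))) ⊆ (W : Set _) := Submodule.subset_span
  let L₀ : Submodule ℤ W := L.comap (W.subtype.restrictScalars ℤ)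
  have h_img : W.subtype '' L₀ = L := by
    rw [← LinearMap.coe_restrictScalars ℤ W.subtype, ← Submodule.map_coe
      (W.subtype.restrictScalars ℤ), Submodule.map_comap_eq_self]
    exact fun x hx ↦ LinearMap.mem_range.mpr ⟨⟨x, hLW hx⟩, rfl⟩
  haveI : DiscreteTopology L₀ := by
    refine DiscreteTopology.preimage_of_continuous_injective
      (L : Set (EuclideanSpace ℝ (Fin n))) ?_ (injective_subtype _)
    exact LinearMap.continuous_of_finiteDimensional W.subtype
  haveI : IsZLattice ℝ L₀ := ⟨by
    rw [← (Submodule.map_injective_of_injective (injective_subtype W)).eq_iff,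
      Submodule.map_span, Submodule.map_top, range_subtype, h_img, hW]⟩
  haveI : Module.Finite ℤ L₀ := ZLattice.module_finite ℝ L₀
  haveI : Module.Free ℤ L₀ := ZLattice.module_free ℝ L₀
  let b := Module.Free.chooseBasis ℤ L₀
  -- membership of pieces in `L₀`
  have hL₀mem : ∀ (w : EuclideanSpace ℝ (Fin n)) (hw : w ∈ W), w ∈ L → (⟨w, hw⟩ : W) ∈ L₀ := by
    intro w hw hwL
    exact hwL
  -- decomposition of elements of `H`
  have hdecomp : ∀ x ∈ H, ∃ v ∈ V, ∃ w, w ∈ L ∧ w ∈ W ∧ x = v + w := by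
    intro x hx
    refine ⟨orthogonalProjection V x, Submodule.coe_mem _,
      x - orthogonalProjection V x, ?_, ?_, by abel⟩
    · refine (hLmem _).mpr ⟨H.sub_mem hx (hVsubH _ (Submodule.coe_mem _)), ?_⟩
      exact Submodule.sub_starProjection_mem_orthogonal x
    · exact hLW ((hLmem _).mpr ⟨H.sub_mem hx (hVsubH _ (Submodule.coe_mem _)),
        Submodule.sub_starProjection_mem_orthogonal x⟩)
  have hΓH : ∀ x ∈ Γ, x ∈ H := fun x hx => Γ.le_topologicalClosure hx
  -- `V` is orthogonal to `W`
  have hWVperp : W ≤ Vᗮ := by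
    rw [hW, Submodule.span_le]
    exact fun w hw => ((hLmem w).mp hw).2
  have hVWperp : ∀ v ∈ V, v ∈ Wᗮ := by
    intro v hv
    rw [Submodule.mem_orthogonal]
    intro w hw
    rw [real_inner_comm]
    exact (Submodule.mem_orthogonal V w).mp (hWVperp hw) v hv
  rcases isEmpty_or_nonempty (Module.Free.ChooseBasisIndex ℤ L₀) with hEmpty | hNe
  · -- `L = 0`, so `H ⊆ V` and any functional vanishing on `V` works
    haveI : Subsingleton L₀ := by
      constructor
      intro a c
      have hre : b.repr a = b.repr c := by
        ext i
        exact isEmptyElim i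
      exact b.repr.injective hre
    have hL0 : ∀ x ∈ L, x = (0 : EuclideanSpace ℝ (Fin n)) := by
      intro x hx
      have h1 : (⟨x, hLW hx⟩ : W) ∈ L₀ := hL₀mem x (hLW hx) hx
      have h2 : ((⟨⟨x, hLW hx⟩, h1⟩ : L₀)) = (0 : L₀) := Subsingleton.elim _ _
      have h3 := congrArg (fun y : L₀ => ((y : W) : EuclideanSpace ℝ (Fin n))) h2
      simpa using h3
    have hHV : ∀ x ∈ H, x ∈ V := by
      intro x hx
      obtain ⟨v, hv, w, hwL, _, rfl⟩ := hdecomp x hx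
      rw [hL0 w hwL, add_zero]
      exact hv
    -- `V ≠ ⊤`
    have hVne : V ≠ ⊤ := by
      intro hVtop
      apply hnd
      intro x
      have : x ∈ H := hVsubH x (hVtop ▸ Submodule.mem_top)
      exact (this : x ∈ closure (Γ : Set _))
    have hVperpne : Vᗮ ≠ ⊥ := fun h => hVne (Submodule.orthogonal_eq_bot_iff.mp h)
    obtain ⟨uu, huu, huune⟩ := Submodule.ne_bot_iff _ |>.mp hVperpne
    refine ⟨(innerSL ℝ uu).toLinearMap, ?_, ?_⟩
    · intro hf
      apply huune
      have h2 : (inner ℝ uu uu : ℝ) = 0 := congrArg (fun g : _ →ₗ[ℝ] ℝ => g uu) hf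
      exact inner_self_eq_zero.mp h2
    · intro x hx
      refine ⟨0, ?_⟩
      have hx' : x ∈ V := hHV x (hΓH x hx)
      have h0 : (inner ℝ x uu : ℝ) = 0 := (Submodule.mem_orthogonal V uu).mp huu x hx'
      show (innerSL ℝ uu) x = ((0 : ℤ) : ℝ)
      rw [innerSL_apply_apply, real_inner_comm]
      simpa using h0
  · obtain ⟨i₁⟩ := hNe
    let B := b.ofZLatticeBasis ℝ L₀
    let P := orthogonalProjection W
    refine ⟨(B.coord i₁) ∘ₗ (P.toLinearMap), ?_, ?_⟩
    · intro hf
      have h1 : P ((B i₁ : W) : EuclideanSpace ℝ (Fin n)) = B i₁ :=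
        orthogonalProjection_mem_subspace_eq_self (B i₁)
      have h2 := congrArg (fun g => g ((B i₁ : W) : EuclideanSpace ℝ (Fin n))) hf
      simp only [LinearMap.comp_apply, LinearMap.zero_apply, ContinuousLinearMap.coe_coe] at h2
      rw [h1] at h2
      simp [Basis.coord_apply] at h2
    · intro x hx
      obtain ⟨v, hv, w, hwL, hwW, rfl⟩ := hdecomp x (hΓH x hx)
      have hPv : P v = 0 :=
        orthogonalProjection_mem_subspace_orthogonalComplement_eq_zero (hVWperp v hv)
      have hPw : P w = ⟨w, hwW⟩ :=
        orthogonalProjection_mem_subspace_eq_self (⟨w, hwW⟩ : W)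
      refine ⟨b.repr ⟨⟨w, hwW⟩, hL₀mem w hwW hwL⟩ i₁, ?_⟩
      have hrep := Basis.ofZLatticeBasis_repr_apply ℝ L₀ b ⟨⟨w, hwW⟩, hL₀mem w hwW hwL⟩ i₁
      have hPvw : P (v + w) = ⟨w, hwW⟩ := by rw [map_add, hPv, hPw, zero_add]
      show B.coord i₁ (P (v + w)) = _
      rw [hPvw, Basis.coord_apply]
      exact hrep

/-- If `A` is an invertible `m × m` real matrix (`m ≥ 2`) whose rows each have
entries linearly independent over `ℚ`, and whose last row is orthogonal to the
others, then the first `m - 1` rows define a generic `(m-1)`-tuple of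
right-invariant orders on `ℤ^m`: any prescribed open intervals for the values
`c_i·z` contain a common lattice point. -/
theorem stmt_11 (m : ℕ) (hm : 2 ≤ m) (A : Matrix (Fin m) (Fin m) ℝ)
    (hdet : A.det ≠ 0)
    (hrows : ∀ i : Fin m, LinearIndependent ℚ (A i))
    (horth : ∀ i : Fin m, (i : ℕ) < m - 1 →
      (∑ j, A ⟨m - 1, by omega⟩ j * A i j) = 0) :
    (∀ x y : Fin (m - 1) → ℝ, (∀ i, x i < y i) →
      ∃ z : Fin m → ℤ, ∀ i : Fin (m - 1),
        x i < (∑ j, A ⟨i, by omega⟩ j * (z j : ℝ)) ∧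
          (∑ j, A ⟨i, by omega⟩ j * (z j : ℝ)) < y i) ∧
    (∀ a b : Fin (m - 1) → (Fin m → ℤ),
      (∀ i : Fin (m - 1),
        (∑ j, A ⟨i, by omega⟩ j * (a i j : ℝ)) < ∑ j, A ⟨i, by omega⟩ j * (b i j : ℝ)) →
      ∃ z : Fin m → ℤ, ∀ i : Fin (m - 1),
        (∑ j, A ⟨i, by omega⟩ j * (a i j : ℝ)) < (∑ j, A ⟨i, by omega⟩ j * (z j : ℝ)) ∧
          (∑ j, A ⟨i, by omega⟩ j * (z j : ℝ)) < ∑ j, A ⟨i, by omega⟩ j * (b i j : ℝ)) := by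
  classical
  have main : ∀ x y : Fin (m - 1) → ℝ, (∀ i, x i < y i) →
      ∃ z : Fin m → ℤ, ∀ i : Fin (m - 1),
        x i < (∑ j, A ⟨i, by omega⟩ j * (z j : ℝ)) ∧
          (∑ j, A ⟨i, by omega⟩ j * (z j : ℝ)) < y i := by
    intro x y hxy
    -- the additive map from the lattice to Euclidean space
    let φfun : (Fin m → ℤ) → (Fin (m - 1) → ℝ) :=
      fun z i => ∑ j, A ⟨i.1, by omega⟩ j * (z j : ℝ)
    let ψ : (Fin m → ℤ) →+ EuclideanSpace ℝ (Fin (m - 1)) :=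
    { toFun := fun z => (EuclideanSpace.equiv (Fin (m - 1)) ℝ).symm (φfun z)
      map_zero' := by
        show (EuclideanSpace.equiv (Fin (m - 1)) ℝ).symm (φfun 0) = 0
        have h0 : φfun 0 = 0 := by
          funext i
          simp [φfun]
        rw [h0]
        simp
      map_add' := fun z w => by
        have hadd : φfun (z + w) = φfun z + φfun w := by
          funext i
          simp only [φfun, Pi.add_apply]
          rw [← Finset.sum_add_distrib]
          refine Finset.sum_congr rfl fun j _ => ?_
          push_cast
          ring
        show (EuclideanSpace.equiv (Fin (m - 1)) ℝ).symm (φfun (z + w))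
          = (EuclideanSpace.equiv (Fin (m - 1)) ℝ).symm (φfun z)
            + (EuclideanSpace.equiv (Fin (m - 1)) ℝ).symm (φfun w)
        rw [hadd]
        simp }
    have hψ_apply : ∀ (z : Fin m → ℤ) (i : Fin (m - 1)),
        ψ z i = ∑ j, A ⟨i.1, by omega⟩ j * (z j : ℝ) := fun z i => rfl
    -- density of the image subgroup
    have hdense : Dense ((ψ.range : AddSubgroup _) : Set (EuclideanSpace ℝ (Fin (m - 1)))) := by
      by_contra hnd
      obtain ⟨f, hf0, hfint⟩ := exists_int_functional _ hnd
      set lam : Fin (m - 1) → ℝ := fun i => f (EuclideanSpace.single i (1 : ℝ)) with hlam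
      have hf_expand : ∀ v : EuclideanSpace ℝ (Fin (m - 1)), f v = ∑ i, v i * lam i := by
        intro v
        have hv := (EuclideanSpace.basisFun (Fin (m - 1)) ℝ).sum_repr v
        conv_lhs => rw [← hv]
        rw [map_sum]
        refine Finset.sum_congr rfl fun i _ => ?_
        rw [EuclideanSpace.basisFun_repr, map_smul, EuclideanSpace.basisFun_apply, smul_eq_mul]
      have hcol : ∀ j : Fin m, ∃ k : ℤ,
          (∑ i : Fin (m - 1), A ⟨i.1, by omega⟩ j * lam i) = (k : ℝ) := by
        intro j
        obtain ⟨k, hk⟩ := hfint (ψ (Pi.single j 1)) (AddMonoidHom.mem_range.mpr ⟨Pi.single j 1, rfl⟩)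
        refine ⟨k, ?_⟩
        rw [hf_expand] at hk
        rw [← hk]
        refine Finset.sum_congr rfl fun i _ => ?_
        congr 1
        rw [hψ_apply]
        rw [Finset.sum_eq_single j]
        · simp
        · intro j' _ hj'
          simp [Pi.single_apply, hj']
        · simp
      choose kvec hkvec using hcol
      -- linear independence of the first m-1 rows over ℝ
      have hrowsR : LinearIndependent ℝ (fun i : Fin m => A i) :=
        Matrix.linearIndependent_rows_iff_isUnit.mpr
          ((Matrix.isUnit_iff_isUnit_det A).mpr (isUnit_iff_ne_zero.mpr hdet))
      have hsub : LinearIndependent ℝ (fun i : Fin (m - 1) => A ⟨i.1, by omega⟩) := by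
        have hinj : Function.Injective (fun i : Fin (m - 1) => (⟨i.1, by omega⟩ : Fin m)) :=
          fun a b hab => Fin.ext (by simpa using congrArg Fin.val hab)
        exact hrowsR.comp _ hinj
      have hlam_zero : (∀ j : Fin m,
          (∑ i : Fin (m - 1), A ⟨i.1, by omega⟩ j * lam i) = 0) → lam = 0 := by
        intro h0
        have hsum : (∑ i : Fin (m - 1), lam i • A ⟨i.1, by omega⟩) = (0 : Fin m → ℝ) := by
          funext j
          rw [Finset.sum_apply]
          simp only [Pi.smul_apply, smul_eq_mul, Pi.zero_apply]
          rw [← h0 j]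
          exact Finset.sum_congr rfl fun i _ => mul_comm _ _
        have hz := Fintype.linearIndependent_iff.mp hsub lam hsum
        funext i
        exact hz i
      -- orthogonality gives that kvec is orthogonal to the last row
      have horthK : (∑ j, A ⟨m - 1, by omega⟩ j * (kvec j : ℝ)) = 0 := by
        calc ∑ j, A ⟨m - 1, by omega⟩ j * (kvec j : ℝ)
            = ∑ j, A ⟨m - 1, by omega⟩ j * (∑ i : Fin (m - 1), A ⟨i.1, by omega⟩ j * lam i) := by
              refine Finset.sum_congr rfl fun j _ => ?_
              rw [hkvec j]
          _ = ∑ j, ∑ i : Fin (m - 1), A ⟨m - 1, by omega⟩ j * (A ⟨i.1, by omega⟩ j * lam i) := by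
              refine Finset.sum_congr rfl fun j _ => ?_
              rw [Finset.mul_sum]
          _ = ∑ i : Fin (m - 1), ∑ j, A ⟨m - 1, by omega⟩ j * (A ⟨i.1, by omega⟩ j * lam i) :=
              Finset.sum_comm
          _ = ∑ i : Fin (m - 1), (∑ j, A ⟨m - 1, by omega⟩ j * A ⟨i.1, by omega⟩ j) * lam i := by
              refine Finset.sum_congr rfl fun i _ => ?_
              rw [Finset.sum_mul]
              refine Finset.sum_congr rfl fun j _ => ?_
              ring
          _ = 0 := by
              refine Finset.sum_eq_zero fun i _ => ?_
              rw [horth ⟨i.1, by omega⟩ (by exact i.2), zero_mul]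
      -- ℚ-linear independence of the last row kills kvec
      have hkzero : ∀ j, kvec j = 0 := by
        have hq0 : (∑ j, ((kvec j : ℚ)) • A ⟨m - 1, by omega⟩ j) = 0 := by
          rw [show (∑ j, ((kvec j : ℚ)) • A ⟨m - 1, by omega⟩ j)
              = ∑ j, A ⟨m - 1, by omega⟩ j * (kvec j : ℝ) from ?_, horthK]
          refine Finset.sum_congr rfl fun j _ => ?_
          rw [Rat.smul_def]
          push_cast
          ring
        have hq := Fintype.linearIndependent_iff.mp (hrows ⟨m - 1, by omega⟩)
          (fun j => (kvec j : ℚ)) hq0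
        intro j
        have h := hq j
        exact_mod_cast h
      have hlamz : lam = 0 := by
        apply hlam_zero
        intro j
        rw [hkvec j, hkzero j]
        simp
      refine hf0 (LinearMap.ext fun v => ?_)
      rw [hf_expand v, hlamz]
      simp
    -- use density to find a lattice point
    haveI : Nonempty (Fin (m - 1)) := ⟨⟨0, by omega⟩⟩
    let p : EuclideanSpace ℝ (Fin (m - 1)) :=
      (EuclideanSpace.equiv (Fin (m - 1)) ℝ).symm (fun i => (x i + y i) / 2)
    obtain ⟨ε, hεpos, hεle⟩ : ∃ ε > 0, ∀ i, ε ≤ (y i - x i) / 2 := by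
      refine ⟨Finset.univ.inf' Finset.univ_nonempty (fun i => (y i - x i) / 2), ?_, ?_⟩
      · rw [gt_iff_lt, Finset.lt_inf'_iff]
        intro i _
        linarith [hxy i]
      · intro i
        exact Finset.inf'_le _ (Finset.mem_univ i)
    obtain ⟨γ, hγ⟩ := Metric.dense_iff.mp hdense p ε hεpos
    obtain ⟨z, hz⟩ := AddMonoidHom.mem_range.mp hγ.2
    refine ⟨z, fun i => ?_⟩
    have hdist : dist γ p < ε := Metric.mem_ball.mp hγ.1
    have hcoord := coord_le_dist γ p i
    have hpi : p i = (x i + y i) / 2 := rfl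
    have hγi : γ i = ∑ j, A ⟨i.1, by omega⟩ j * (z j : ℝ) := by
      rw [← hz]
      rfl
    have habs : |(∑ j, A ⟨i.1, by omega⟩ j * (z j : ℝ)) - (x i + y i) / 2| < (y i - x i) / 2 := by
      rw [← hγi, ← hpi]
      exact lt_of_le_of_lt hcoord (lt_of_lt_of_le hdist (hεle i))
    have h2 := abs_lt.mp habs
    exact ⟨by linarith [h2.1], by linarith [h2.2]⟩
  exact ⟨main, fun a b hab => main _ _ hab⟩
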